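/- arXiv:1012.0596 — 2 statements merged into one kernel-verified Lean document; each statement's English description precedes it below -/
import Mathlib

section
/- Suppose σ, τ ∈ T^{[n]} (n-tuples from a single level of a coherent tree T, in lexicographically non-decreasing order) with Ht(σ) ≤ Ht(τ), and the pair {σ, τ} is regular, i.e. D(τ(i), τ(0)) ∩ Ht(σ) = D(σ(i), σ(0)) for all i < n. If moreover σ(i) and τ(i) are incomparable for each i, then Δ(τ(i), σ(i)) = Δ(τ(j), σ(j)) for all i, j < n. -/
noncomputable section

namespace Basis5

/-- The first uncountable ordinal. -/
def omega1 : Ordinal.{0} := (Cardinal.aleph 1).ord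

/-- A node of the binary tree `2^{<ω₁}`: a function defined (i.e. `some`-valued)
exactly on a countable ordinal. -/
def IsNodeFun (f : Ordinal.{0} → Option Bool) : Prop :=
  ∃ a, a < omega1 ∧ ∀ ξ, (f ξ).isSome ↔ ξ < a

def BNode := {f : Ordinal → Option Bool // IsNodeFun f}

/-- The height (domain) of a node. -/
def ht (t : BNode) : Ordinal := sInf {a | ∀ ξ, (t.1 ξ).isSome ↔ ξ < a}

/-- Restriction of a node to (at most) height `α`. -/
def restrict (t : BNode) (α : Ordinal) : BNode :=
  ⟨fun ξ => if ξ < α then t.1 ξ else none, by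
    obtain ⟨a, ha, hfa⟩ := t.2
    refine ⟨min α a, lt_of_le_of_lt (min_le_right _ _) ha, fun ξ => ?_⟩
    by_cases h : ξ < α
    · simp [h, hfa ξ, lt_min_iff]
    · simp [h, lt_min_iff]⟩

/-- `s` is an initial segment of `t` (the tree order of `2^{<ω₁}`). -/
def extends' (s t : BNode) : Prop := restrict t (ht s) = s

/-- `s` and `t` are incomparable in the tree order. -/
def Incomp (s t : BNode) : Prop := ¬ extends' s t ∧ ¬ extends' t s

/-- `D(s,t)`, the set of coordinates where `s` and `t` differ. -/
def diffSet (s t : BNode) : Set Ordinal := {ξ | s.1 ξ ≠ t.1 ξ}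

/-- `Δ(s,t) = min D(s,t)`. -/
def delta (s t : BNode) : Ordinal := sInf (diffSet s t)

/-- The meet `s ∧ t = s ↾ Δ(s,t)`. -/
def meet (s t : BNode) : BNode := restrict s (delta s t)

/-- Lexicographic (non-strict) order on nodes of the same height. -/
def lexLE (s t : BNode) : Prop := s = t ∨ t.1 (delta s t) = some true

/-- `∧(X)`: the set of pairwise meets of incomparable elements of `X`. -/
def wedgeSet (X : Set BNode) : Set BNode :=
  {w | ∃ s ∈ X, ∃ t ∈ X, Incomp s t ∧ w = meet s t}

def DownClosed (A : Set BNode) : Prop := ∀ t ∈ A, ∀ α, restrict t α ∈ A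

def IsAntichainN (X : Set BNode) : Prop := ∀ s ∈ X, ∀ t ∈ X, s ≠ t → Incomp s t

/-- An Aronszajn tree: uncountable, downward closed, countable levels and chains. -/
def IsAronszajn (T : Set BNode) : Prop :=
  DownClosed T ∧ ¬ T.Countable ∧ (∀ α, {t : BNode | t ∈ T ∧ ht t = α}.Countable) ∧
    ∀ c : Set BNode, c ⊆ T → (∀ s ∈ c, ∀ t ∈ c, extends' s t ∨ extends' t s) → c.Countable

/-- A subtree: an uncountable downward closed subset. -/
def IsSubtree (T A : Set BNode) : Prop := A ⊆ T ∧ DownClosed A ∧ ¬ A.Countable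

def Coherent (T : Set BNode) : Prop :=
  ∀ s ∈ T, ∀ t ∈ T, ht s = ht t → (diffSet s t).Finite

def IsSpecial (T : Set BNode) : Prop :=
  ∃ f : BNode → ℕ, ∀ s ∈ T, ∀ t ∈ T, extends' s t → s ≠ t → f s ≠ f t

def FinModClosed (T : Set BNode) : Prop :=
  ∀ t ∈ T, ∀ s : BNode, ht s = ht t → (diffSet s t).Finite → s ∈ T

/-- Club subsets of `ω₁`. -/
def IsClubBelow (C : Set Ordinal) : Prop :=
  C ⊆ Set.Iio omega1 ∧ (∀ a < omega1, ∃ b ∈ C, a < b) ∧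
    ∀ a < omega1, (C ∩ Set.Iio a).Nonempty → sSup (C ∩ Set.Iio a) = a → a ∈ C

/-- Stationary subsets of `ω₁`. -/
def IsStationary (S : Set Ordinal) : Prop :=
  S ⊆ Set.Iio omega1 ∧ ∀ C, IsClubBelow C → (S ∩ C).Nonempty

/-- `a` is a limit point of `C`. -/
def IsLimitOf (C : Set Ordinal) (a : Ordinal) : Prop :=
  (C ∩ Set.Iio a).Nonempty ∧ sSup (C ∩ Set.Iio a) = a

/-- Membership in `T^{[n]}`: an `≤_lex`-nondecreasing `n`-tuple from a single level of `T`. -/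
def IsTup (T : Set BNode) (n : ℕ) (σ : Fin n → BNode) : Prop :=
  (∀ i, σ i ∈ T) ∧ (∀ i j, ht (σ i) = ht (σ j)) ∧
    ∀ i j : Fin n, i ≤ j → lexLE (σ i) (σ j)

/-- Coordinatewise restriction of a tuple. -/
def tres {n : ℕ} (σ : Fin n → BNode) (α : Ordinal) : Fin n → BNode :=
  fun i => restrict (σ i) α

def tExt {n : ℕ} (σ τ : Fin n → BNode) : Prop := ∀ i, extends' (σ i) (τ i)

def tIncomp {n : ℕ} (σ τ : Fin n → BNode) : Prop := ¬ tExt σ τ ∧ ¬ tExt τ σ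

def tdiff {n : ℕ} (σ τ : Fin n → BNode) : Set Ordinal :=
  {ξ | ∃ i, (σ i).1 ξ ≠ (τ i).1 ξ}

/-- `Δ(σ,τ)` for tuples: least level where some coordinate differs. -/
def tdelta {n : ℕ} (σ τ : Fin n → BNode) : Ordinal := sInf (tdiff σ τ)

def tmeet {n : ℕ} (σ τ : Fin n → BNode) : Fin n → BNode := tres σ (tdelta σ τ)

def twedge {n : ℕ} (X : Set (Fin n → BNode)) : Set (Fin n → BNode) :=
  {w | ∃ σ ∈ X, ∃ τ ∈ X, tIncomp σ τ ∧ w = tmeet σ τ}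

def tAntichain {n : ℕ} (X : Set (Fin n → BNode)) : Prop :=
  ∀ σ ∈ X, ∀ τ ∈ X, σ ≠ τ → tIncomp σ τ

/-- `σ ∈ K^{[n]} = K^n ∩ T^{[n]}`. -/
def KTup (T K : Set BNode) (n : ℕ) (σ : Fin n → BNode) : Prop :=
  IsTup T n σ ∧ ∀ i, σ i ∈ K

/-- The pair `{σ, τ}` (with `Ht σ ≤ Ht τ`) is regular:
`D(τ(i), τ(0)) ∩ Ht(σ) = D(σ(i), σ(0))` for all `i < n`. -/
def RegPair (n : ℕ) (σ τ : Fin n → BNode) : Prop :=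
  ∀ (h : 0 < n) (i : Fin n),
    diffSet (τ i) (τ ⟨0, h⟩) ∩ Set.Iio (ht (σ ⟨0, h⟩)) = diffSet (σ i) (σ ⟨0, h⟩)

/-- A set of tuples is regular if every pair of its elements is regular. -/
def RegSet {n : ℕ} (X : Set (Fin n → BNode)) : Prop :=
  ∀ σ ∈ X, ∀ τ ∈ X, (∀ i, ht (σ i) ≤ ht (τ i)) → RegPair n σ τ

/-- A subtree of `T^{[n]}`: uncountable set of tuples closed under restriction. -/
def IsTupSubtree (T : Set BNode) (n : ℕ) (R : Set (Fin n → BNode)) : Prop :=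
  (∀ σ ∈ R, IsTup T n σ) ∧ (∀ σ ∈ R, ∀ α, tres σ α ∈ R) ∧ ¬ R.Countable

/-- The family `F_n` of regular subtrees of `T^{[n]}` whose meets avoid `K^{[n]}`. -/
def Fn (T K : Set BNode) (n : ℕ) : Set (Set (Fin n → BNode)) :=
  {R | IsTupSubtree T n R ∧ RegSet R ∧ ∀ w ∈ twedge R, ¬ KTup T K n w}

/-- `F_n^⊥`: subtrees of `T^{[n]}` orthogonal to every member of `F_n`. -/
def FnPerp (T K : Set BNode) (n : ℕ) : Set (Set (Fin n → BNode)) :=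
  {B | IsTupSubtree T n B ∧ ∀ A ∈ Fn T K n, (A ∩ B).Countable}

/-- `⟨N_ξ : ξ ∈ C⟩` witnesses `φ₀(F_n)`. -/
def Phi0Witness (T K : Set BNode) (n : ℕ) (C : Set Ordinal)
    (N : Ordinal → Set (Set (Fin n → BNode))) : Prop :=
  IsClubBelow C ∧
  (∀ ξ ∈ C, (N ξ).Countable ∧ N ξ ⊆ Fn T K n ∪ FnPerp T K n) ∧
  (∀ ξ ∈ C, ∀ η ∈ C, ξ ≤ η → N ξ ⊆ N η) ∧
  (∀ ν ∈ C, IsLimitOf C ν → N ν = ⋃ ξ ∈ C ∩ Set.Iio ν, N ξ) ∧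
  (∀ ν ∈ C, ∀ σ : Fin n → BNode, IsTup T n σ → (∀ i, ht (σ i) = ν) →
    (∃ ν₀ < ν, ∀ ξ ∈ C, ν₀ < ξ → ξ < ν → ∃ A ∈ Fn T K n, A ∈ N ξ ∧ tres σ ξ ∈ A) ∨
    (∃ B ∈ FnPerp T K n, B ∈ N ν ∧ σ ∈ B))

/-- The coloring `K^{[n]}_φ`. -/
def KPhi (T K : Set BNode) (n : ℕ) (C : Set Ordinal)
    (N : Ordinal → Set (Set (Fin n → BNode))) : Set (Fin n → BNode) :=
  {σ | IsTup T n σ ∧ ∃ ν ∈ C, (∀ i, ht (σ i) = ν) ∧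
    ∃ B ∈ FnPerp T K n, B ∈ N ν ∧ σ ∈ B}

/-- The coloring `L^{[n]}_φ = (T^{[n]} ↾ C) \ K^{[n]}_φ`. -/
def LPhi (T K : Set BNode) (n : ℕ) (C : Set Ordinal)
    (N : Ordinal → Set (Set (Fin n → BNode))) : Set (Fin n → BNode) :=
  {σ | IsTup T n σ ∧ (∃ ν ∈ C, ∀ i, ht (σ i) = ν) ∧ σ ∉ KPhi T K n C N}

/-- `ρ` is the `≤_lex`-sorted merge `σ ∪ τ` of the tuples `σ` and `τ`. -/
def IsMerge {n m : ℕ} (σ : Fin n → BNode) (τ : Fin m → BNode)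
    (ρ : Fin (n + m) → BNode) : Prop :=
  (∀ i j : Fin (n + m), i ≤ j → lexLE (ρ i) (ρ j)) ∧
  (↑(List.ofFn ρ) : Multiset BNode) = ↑(List.ofFn σ) + ↑(List.ofFn τ)

/-- `σ` is a subsequence of `τ`. -/
def IsSubseq {m n : ℕ} (σ : Fin m → BNode) (τ : Fin n → BNode) : Prop :=
  ∃ ι : Fin m → Fin n, StrictMono ι ∧ σ = τ ∘ ι

/-- A level sequence `{σ_α : α ∈ S}` in `T^{[n]}`. -/
def LevelSeq (T : Set BNode) (n : ℕ) (S : Set Ordinal)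
    (σ : Ordinal → Fin n → BNode) : Prop :=
  ∀ α ∈ S, IsTup T n (σ α) ∧ ∀ i, ht (σ α i) = α

/-- The level sequence `{σ_α : α ∈ S}` is regular. -/
def RegSeq {n : ℕ} (S : Set Ordinal) (σ : Ordinal → Fin n → BNode) : Prop :=
  ∀ α ∈ S, ∀ β ∈ S, α ≤ β → RegPair n (σ α) (σ β)

/-- The tree `R_X` generated by `X` (downward closure). -/
def downClosure (X : Set BNode) : Set BNode :=
  {r | ∃ t ∈ X, ∃ ξ ≤ ht t, r = restrict t ξ}

/-- The tree generated by a set of tuples. -/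
def tDownClosure {n : ℕ} (X : Set (Fin n → BNode)) : Set (Fin n → BNode) :=
  {ρ | ∃ σ ∈ X, ∃ ξ, (∀ i, ξ ≤ ht (σ i)) ∧ ρ = tres σ ξ}

end Basis5
namespace Basis5

/-- Martin's Axiom `MA_{ℵ₁}`: every nonempty ccc partial preorder admits a filter
meeting any `ℵ₁`-many dense sets. -/
def CCCPre (P : Type 1) (le : P → P → Prop) : Prop :=
  ∀ A : Set P, (∀ p ∈ A, ∀ q ∈ A, p ≠ q → ¬ ∃ r, le r p ∧ le r q) → A.Countable

def MAaleph1 : Prop :=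
  ∀ (P : Type 1) (le : P → P → Prop), (∀ p, le p p) →
    (∀ p q r, le p q → le q r → le p r) → Nonempty P → CCCPre P le →
    ∀ (ι : Type 1) (D : ι → Set P), Cardinal.mk ι ≤ Cardinal.aleph 1 →
      (∀ i, ∀ p, ∃ q ∈ D i, le q p) →
      ∃ G : Set P, G.Nonempty ∧ (∀ p ∈ G, ∀ q, le p q → q ∈ G) ∧
        (∀ p ∈ G, ∀ q ∈ G, ∃ r ∈ G, le r p ∧ le r q) ∧ ∀ i, (G ∩ D i).Nonempty

/-- `π(X) = X`. -/
def piClosed (X : Set BNode) : Prop :=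
  ∀ s ∈ X, ∀ t ∈ X, ht s ≤ ht t → restrict t (ht s) ∈ X

/-- Every level-section of `X`, enumerated in `≤_lex`-increasing order, lies in `K_φ`. -/
def SectionsInKPhi (T K : Set BNode) (C : Set Ordinal)
    (N : (k : ℕ) → Ordinal → Set (Set (Fin k → BNode))) (X : Set BNode) : Prop :=
  ∀ α : Ordinal, {x ∈ X | ht x = α}.Nonempty →
    ∃ (k : ℕ) (ρ : Fin k → BNode), Function.Injective ρ ∧
      (∀ i j : Fin k, i ≤ j → lexLE (ρ i) (ρ j)) ∧
      Set.range ρ = {x ∈ X | ht x = α} ∧ ρ ∈ KPhi T K k C (N k)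

/-- All finite same-height `≤_lex`-sorted tuples from `X` lie in `K_φ`. -/
def FinLevelSubsetsInKPhi (T K : Set BNode) (C : Set Ordinal)
    (N : (k : ℕ) → Ordinal → Set (Set (Fin k → BNode))) (X : Set BNode) : Prop :=
  ∀ (k : ℕ) (ρ : Fin k → BNode), Function.Injective ρ → (∀ i, ρ i ∈ X) →
    (∀ i j, ht (ρ i) = ht (ρ j)) → (∀ i j : Fin k, i ≤ j → lexLE (ρ i) (ρ j)) →
    ρ ∈ KPhi T K k C (N k)

section Forcing

variable {EM : Type 1}

/-- A condition of the forcing `∂*(K)`: a pair `(X_p, 𝓜_p)`.  Here `EM` is an abstract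
type of (countable elementary submodels of `H(ω₂)`), `mem` its `∈`-relation,
`δe M = M ∩ ω₁`, and `E` the club `𝓔` of such models. -/
def IsCond (T K : Set BNode) (C : Set Ordinal)
    (N : (k : ℕ) → Ordinal → Set (Set (Fin k → BNode)))
    (mem : EM → EM → Prop) (δe : EM → Ordinal) (E : Set EM)
    (p : Set BNode × Set EM) : Prop :=
  p.1.Finite ∧ p.1 ⊆ T ∧ (∀ x ∈ p.1, ht x ∈ C) ∧ piClosed p.1 ∧
  SectionsInKPhi T K C N p.1 ∧
  p.2.Finite ∧ p.2 ⊆ E ∧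
  (∀ M ∈ p.2, ∀ M' ∈ p.2, M = M' ∨ mem M M' ∨ mem M' M) ∧
  (∀ x ∈ p.1, ∃ M ∈ p.2, ht x = δe M)

/-- The order of `∂*(K)`: coordinatewise reverse inclusion. -/
def condLE (p q : Set BNode × Set EM) : Prop := q.1 ⊆ p.1 ∧ q.2 ⊆ p.2

end Forcing

/-- Closure of `X` in the tree topology. -/
def clTree (X : Set BNode) : Set BNode :=
  X ∪ {t | Order.IsSuccLimit (ht t) ∧ ∀ β < ht t, ∃ s ∈ X, extends' s t ∧ β ≤ ht s}

/-! ### Set-theoretic background: elementary submodels of `(V, ∈)`, properness, BPFA -/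

/-- The language with a single binary relation (interpreted below as membership). -/
abbrev memLang : FirstOrder.Language := FirstOrder.Language.order

/-- `ZFSet.{0}` as a structure in the membership language: the unique binary relation
symbol is interpreted as `∈`. -/
instance : memLang.Structure ZFSet.{0} where
  RelMap | .le => fun x => x 0 ∈ x 1

/-- `R` is (codes) a partial order on the set `P`. -/
def ZIsPoset (P R : ZFSet.{0}) : Prop :=
  (∀ x y : ZFSet.{0}, ZFSet.pair x y ∈ R → x ∈ P ∧ y ∈ P) ∧
  (∀ x ∈ P, ZFSet.pair x x ∈ R) ∧
  (∀ x y z : ZFSet.{0}, ZFSet.pair x y ∈ R → ZFSet.pair y z ∈ R → ZFSet.pair x z ∈ R) ∧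
  (∀ x y : ZFSet.{0}, ZFSet.pair x y ∈ R → ZFSet.pair y x ∈ R → x = y)

def ZCompat (P R p q : ZFSet.{0}) : Prop :=
  ∃ r ∈ P, ZFSet.pair r p ∈ R ∧ ZFSet.pair r q ∈ R

def ZDense (P R D : ZFSet.{0}) : Prop :=
  (∀ x ∈ D, x ∈ P) ∧ ∀ p ∈ P, ∃ q ∈ D, ZFSet.pair q p ∈ R

/-- Properness of the poset `(P, R)`, via countable elementary submodels of the
universe of sets: every condition in such a model has a generic extension. -/
def ZIsProper (P R : ZFSet.{0}) : Prop :=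
  ∀ M : memLang.ElementarySubstructure ZFSet.{0}, (M : Set ZFSet.{0}).Countable →
    P ∈ (M : Set ZFSet.{0}) → R ∈ (M : Set ZFSet.{0}) →
    ∀ p ∈ (M : Set ZFSet.{0}), p ∈ P →
      ∃ q ∈ P, ZFSet.pair q p ∈ R ∧
        ∀ D ∈ (M : Set ZFSet.{0}), ZDense P R D →
          ∀ r ∈ P, ZFSet.pair r q ∈ R → ∃ s ∈ (M : Set ZFSet.{0}), s ∈ D ∧ ZCompat P R s r

/-- The Bounded Proper Forcing Axiom: for every proper poset and `ℵ₁`-many maximal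
antichains of size `≤ ℵ₁`, there is a filter meeting them all. -/
def BPFA : Prop :=
  ∀ P R : ZFSet.{0}, ZIsPoset P R → ZIsProper P R →
    ∀ (ι : Type 1) (A : ι → ZFSet.{0}), Cardinal.mk ι ≤ Cardinal.aleph 1 →
      (∀ i, (A i).toSet ⊆ P.toSet ∧ Cardinal.mk (A i).toSet ≤ Cardinal.aleph 1 ∧
        (∀ a ∈ A i, ∀ b ∈ A i, a ≠ b → ¬ ZCompat P R a b) ∧
        (∀ p ∈ P, ∃ a ∈ A i, ZCompat P R a p)) →
      ∃ G : Set ZFSet.{0}, G ⊆ P.toSet ∧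
        (∀ p ∈ G, ∀ q ∈ P.toSet, ZFSet.pair p q ∈ R → q ∈ G) ∧
        (∀ p ∈ G, ∀ q ∈ G, ∃ r ∈ G, ZFSet.pair r p ∈ R ∧ ZFSet.pair r q ∈ R) ∧
        ∀ i, ∃ a, a ∈ A i ∧ a ∈ G

/-! ### The axiom φ, stated for Aronszajn trees of `n`-tuples (the trees used in the paper) -/

/-- An Aronszajn tree of `n`-tuples (a subtree of the `n`-th power of `2^{<ω₁}`). -/
def TupAronszajn (n : ℕ) (𝒯 : Set (Fin n → BNode)) : Prop :=
  (∀ σ ∈ 𝒯, (∀ i j, ht (σ i) = ht (σ j))) ∧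
  (∀ σ ∈ 𝒯, ∀ α, tres σ α ∈ 𝒯) ∧ ¬ 𝒯.Countable ∧
  (∀ α, {σ ∈ 𝒯 | ∀ i, ht (σ i) = α}.Countable) ∧
  (∀ c ⊆ 𝒯, (∀ σ ∈ c, ∀ τ ∈ c, tExt σ τ ∨ tExt τ σ) → c.Countable)

/-- A subtree of a tuple-tree. -/
def TupSubtree {n : ℕ} (𝒯 A : Set (Fin n → BNode)) : Prop :=
  A ⊆ 𝒯 ∧ (∀ σ ∈ A, ∀ α, tres σ α ∈ A) ∧ ¬ A.Countable

/-- `F^⊥` for a family `F` of subtrees of `𝒯`. -/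
def GPerp {n : ℕ} (𝒯 : Set (Fin n → BNode)) (F : Set (Set (Fin n → BNode))) :
    Set (Set (Fin n → BNode)) :=
  {B | TupSubtree 𝒯 B ∧ ∀ A ∈ F, (A ∩ B).Countable}

/-- `φ₀(F)` for a family `F` of subtrees of the tree `𝒯`. -/
def GPhi0 {n : ℕ} (𝒯 : Set (Fin n → BNode)) (F : Set (Set (Fin n → BNode))) : Prop :=
  ∃ (C : Set Ordinal) (N : Ordinal → Set (Set (Fin n → BNode))),
    IsClubBelow C ∧ (∀ ξ ∈ C, (N ξ).Countable ∧ N ξ ⊆ F ∪ GPerp 𝒯 F) ∧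
    (∀ ξ ∈ C, ∀ η ∈ C, ξ ≤ η → N ξ ⊆ N η) ∧
    (∀ ν ∈ C, IsLimitOf C ν → N ν = ⋃ ξ ∈ C ∩ Set.Iio ν, N ξ) ∧
    ∀ ν ∈ C, ∀ σ ∈ 𝒯, (∀ i, ht (σ i) = ν) →
      (∃ ν₀ < ν, ∀ ξ ∈ C, ν₀ < ξ → ξ < ν → ∃ A ∈ F, A ∈ N ξ ∧ tres σ ξ ∈ A) ∨
      (∃ B ∈ GPerp 𝒯 F, B ∈ N ν ∧ σ ∈ B)

/-- The axiom `φ`: for every Aronszajn (tuple-)tree `𝒯` and every family `F`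
of subtrees of `𝒯`, `φ₀(F)` holds. -/
def phiAxiom : Prop :=
  ∀ (n : ℕ) (𝒯 : Set (Fin n → BNode)), TupAronszajn n 𝒯 →
    ∀ F : Set (Set (Fin n → BNode)), (∀ A ∈ F, TupSubtree 𝒯 A) → GPhi0 𝒯 F

end Basis5
namespace Basis5

lemma ht_isSome (t : BNode) (ξ : Ordinal) : (t.1 ξ).isSome ↔ ξ < ht t := by
  obtain ⟨a, ha, hfa⟩ := t.2
  have hht : ht t = a := by
    apply le_antisymm
    · exact csInf_le' hfa
    · refine le_csInf ⟨a, hfa⟩ ?_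
      intro c hc
      by_contra h
      push_neg at h
      exact lt_irrefl c ((hc c).mp ((hfa c).mpr h))
  rw [hht]; exact hfa ξ

end Basis5
namespace Basis5
/-- for a regular pair `{σ, τ}` in `T^{[n]}` with coordinatewise
incomparable entries, `Δ(τ(i), σ(i))` does not depend on `i`. -/
theorem stmt3 (T : Set BNode) (hcoh : Coherent T) (n : ℕ) (hn : 0 < n)
    (σ τ : Fin n → BNode) (hσ : IsTup T n σ) (hτ : IsTup T n τ)
    (a b : Ordinal) (hha : ∀ i, ht (σ i) = a) (hhb : ∀ i, ht (τ i) = b) (hab : a ≤ b)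
    (hreg : ∀ i : Fin n,
      diffSet (τ i) (τ ⟨0, hn⟩) ∩ Set.Iio a = diffSet (σ i) (σ ⟨0, hn⟩))
    (hinc : ∀ i, Incomp (σ i) (τ i)) :
    ∀ i j : Fin n, delta (τ i) (σ i) = delta (τ j) (σ j) := by
  have hA : ∀ (k : Fin n) (ξ : Ordinal), ξ < a →
      ((τ k).1 ξ ≠ (σ k).1 ξ ↔ (τ ⟨0, hn⟩).1 ξ ≠ (σ ⟨0, hn⟩).1 ξ) := by
    intro k ξ hξ
    have hξb : ξ < b := lt_of_lt_of_le hξ hab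
    obtain ⟨x, hx⟩ := Option.isSome_iff_exists.mp
      ((ht_isSome (σ ⟨0, hn⟩) ξ).mpr (by rw [hha]; exact hξ))
    obtain ⟨u, hu⟩ := Option.isSome_iff_exists.mp
      ((ht_isSome (σ k) ξ).mpr (by rw [hha]; exact hξ))
    obtain ⟨y, hy⟩ := Option.isSome_iff_exists.mp
      ((ht_isSome (τ ⟨0, hn⟩) ξ).mpr (by rw [hhb]; exact hξb))
    obtain ⟨v, hv⟩ := Option.isSome_iff_exists.mp
      ((ht_isSome (τ k) ξ).mpr (by rw [hhb]; exact hξb))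
    have hregk : (τ k).1 ξ ≠ (τ ⟨0, hn⟩).1 ξ ↔ (σ k).1 ξ ≠ (σ ⟨0, hn⟩).1 ξ := by
      have h1 : ξ ∈ diffSet (τ k) (τ ⟨0, hn⟩) ∩ Set.Iio a ↔
          ξ ∈ diffSet (σ k) (σ ⟨0, hn⟩) := by rw [hreg k]
      simpa [diffSet, hξ] using h1
    rw [hx, hu, hy, hv] at hregk ⊢
    simp only [ne_eq, Option.some.injEq] at hregk ⊢
    cases x <;> cases y <;> cases u <;> cases v <;> simp_all
  have hB : ∀ k : Fin n, ∃ ξ < a, (τ k).1 ξ ≠ (σ k).1 ξ := by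
    intro k
    by_contra h
    push_neg at h
    apply (hinc k).1
    unfold extends' restrict
    apply Subtype.ext
    funext ξ
    simp only
    by_cases hξ : ξ < ht (σ k)
    · rw [if_pos hξ]
      exact h ξ (by rwa [hha k] at hξ)
    · rw [if_neg hξ]
      have : ¬ ((σ k).1 ξ).isSome := fun hs => hξ ((ht_isSome (σ k) ξ).mp hs)
      exact (Option.not_isSome_iff_eq_none.mp this).symm
  have hC : ∀ k : Fin n,
      delta (τ k) (σ k) ∈ diffSet (τ k) (σ k) ∩ Set.Iio a := by
    intro k
    obtain ⟨ξ, hξa, hξd⟩ := hB k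
    have hne : (diffSet (τ k) (σ k)).Nonempty := ⟨ξ, hξd⟩
    have hmem : delta (τ k) (σ k) ∈ diffSet (τ k) (σ k) := csInf_mem hne
    have hle : delta (τ k) (σ k) ≤ ξ := csInf_le' (hξd : ξ ∈ diffSet (τ k) (σ k))
    exact ⟨hmem, lt_of_le_of_lt hle hξa⟩
  have key : ∀ k : Fin n, delta (τ k) (σ k) = delta (τ ⟨0, hn⟩) (σ ⟨0, hn⟩) := by
    intro k
    have eqset : diffSet (τ k) (σ k) ∩ Set.Iio a
        = diffSet (τ ⟨0, hn⟩) (σ ⟨0, hn⟩) ∩ Set.Iio a := by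
      ext ξ
      constructor
      · rintro ⟨h1, h2⟩; exact ⟨(hA k ξ h2).mp h1, h2⟩
      · rintro ⟨h1, h2⟩; exact ⟨(hA k ξ h2).mpr h1, h2⟩
    apply le_antisymm
    · have h0 := hC ⟨0, hn⟩
      rw [← eqset] at h0
      exact csInf_le' h0.1
    · have hk := hC k
      rw [eqset] at hk
      exact csInf_le' hk.1
  intro i j
  rw [key i, key j]
end Basis5
end
end

section
/- Suppose S is a stationary subset of C and {σ_ξ : ξ ∈ S} is a level sequence in T^{[n]} with every σ_ξ ∈ K^{[n]}_φ. Then there exist distinct ξ, η ∈ S with σ_ξ ∧ σ_η ∈ K^{[n]}. -/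
noncomputable section

namespace Basis5

/-! ### Ordinal and club lemmas -/

lemma omega1_def : omega1 = (Cardinal.aleph 1).ord := rfl

lemma omega1_isLimit : Order.IsSuccLimit omega1 := by
  rw [omega1_def]; exact Cardinal.isSuccLimit_ord (Cardinal.aleph0_le_aleph 1)

lemma succ_lt_omega1 {a : Ordinal} (h : a < omega1) : a + 1 < omega1 := by
  rw [Ordinal.add_one_eq_succ]; exact omega1_isLimit.succ_lt h

lemma countable_Iio_omega1 {a : Ordinal.{0}} (h : a < omega1) :
    (Set.Iio a).Countable := by
  rw [← Set.countable_coe_iff, ← Cardinal.mk_le_aleph0_iff]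
  have := Ordinal.mk_Iio_ordinal a
  rw [this]
  have h2 : a.card < Cardinal.aleph 1 := Cardinal.lt_ord.1 (by rwa [← omega1_def])
  rw [← Cardinal.succ_aleph0, Order.lt_succ_iff] at h2
  exact le_trans (Cardinal.lift_le.2 h2) (le_of_eq Cardinal.lift_aleph0)

lemma iSup_nat_lt_omega1 {f : ℕ → Ordinal.{0}} (h : ∀ k, f k < omega1) :
    iSup f < omega1 := by
  rw [omega1_def] at h ⊢
  refine Cardinal.iSup_lt_ord_of_isRegular Cardinal.isRegular_aleph_one ?_ h
  rw [Cardinal.mk_nat]; exact Cardinal.aleph0_lt_aleph_one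

lemma bddAbove_of_subset_Iio {X : Set Ordinal} {a : Ordinal} (h : X ⊆ Set.Iio a) :
    BddAbove X := ⟨a, fun x hx => le_of_lt (h hx)⟩

lemma exists_gt_of_sSup_eq {X : Set Ordinal} {a b : Ordinal}
    (hX : X ⊆ Set.Iio a) (h : sSup X = a) (hb : b < a) : ∃ x ∈ X, b < x ∧ x < a := by
  by_contra hc
  push_neg at hc
  have : sSup X ≤ b := csSup_le' (fun x hx => by
    by_contra hxb
    exact absurd ((hc x hx) (lt_of_not_ge hxb)) (not_le.2 (hX hx)))
  rw [h] at this
  exact absurd hb (not_lt.2 this)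

lemma sSup_eq_of_cofinal {X : Set Ordinal} {s : Ordinal}
    (hX : X ⊆ Set.Iio s) (hcof : ∀ x < s, ∃ y ∈ X, x < y) (hs : 0 < s) :
    sSup X = s := by
  refine le_antisymm (csSup_le' fun x hx => le_of_lt (hX hx)) ?_
  by_contra hc
  obtain ⟨y, hyX, hy⟩ := hcof (sSup X) (lt_of_not_ge hc)
  exact absurd (le_csSup (bddAbove_of_subset_Iio hX) hyX) (not_le.2 hy)

lemma clubBelow_Iio : IsClubBelow (Set.Iio omega1) := by
  refine ⟨le_refl _, fun a ha => ⟨a + 1, succ_lt_omega1 ha, lt_add_one a⟩,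
    fun a ha _ _ => ha⟩

/-- Generic construction of an increasing ω-sequence below `ω₁` by recursive choice. -/
lemma seq_build (P : ℕ → Ordinal → Ordinal → Prop) (a : Ordinal) (ha : a < omega1)
    (hstep : ∀ k x, x < omega1 → ∃ y, x < y ∧ y < omega1 ∧ P k x y) :
    ∃ b : ℕ → Ordinal, b 0 = a ∧ StrictMono b ∧ (∀ k, b k < omega1) ∧
      ∀ k, P k (b k) (b (k + 1)) := by
  have step : ∀ k (x : {o : Ordinal // o < omega1}), {y : {o : Ordinal // o < omega1} //
      x.1 < y.1 ∧ P k x.1 y.1} := by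
    intro k x
    have := hstep k x.1 x.2
    exact ⟨⟨this.choose, this.choose_spec.2.1⟩, this.choose_spec.1, this.choose_spec.2.2⟩
  let b' : ℕ → {o : Ordinal // o < omega1} := fun k =>
    Nat.rec (motive := fun _ => {o : Ordinal // o < omega1}) ⟨a, ha⟩
      (fun k x => (step k x).1) k
  refine ⟨fun k => (b' k).1, rfl, strictMono_nat_of_lt_succ (fun k => (step k (b' k)).2.1),
    fun k => (b' k).2, fun k => (step k (b' k)).2.2⟩

lemma mem_of_closed_cofinal {Cl : Set Ordinal} (hCl : IsClubBelow Cl) {s : Ordinal}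
    (hs : s < omega1) (hs0 : 0 < s) (hcof : ∀ x < s, ∃ y ∈ Cl, x < y ∧ y < s) :
    s ∈ Cl := by
  have hne : (Cl ∩ Set.Iio s).Nonempty := by
    obtain ⟨y, hy, _, hys⟩ := hcof 0 hs0
    exact ⟨y, hy, hys⟩
  refine hCl.2.2 s hs hne (sSup_eq_of_cofinal (fun x hx => hx.2) ?_ hs0)
  intro x hx
  obtain ⟨y, hy, hxy, hys⟩ := hcof x hx
  exact ⟨y, ⟨hy, hys⟩, hxy⟩

lemma clubBelow_iInter_nat (f : ℕ → Set Ordinal) (h : ∀ k, IsClubBelow (f k)) :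
    IsClubBelow (⋂ k, f k) := by
  refine ⟨fun x hx => (h 0).1 (Set.mem_iInter.1 hx 0), ?_, ?_⟩
  · intro a ha
    obtain ⟨b, hb0, hmono, hblt, hbP⟩ := seq_build (fun k _ y => y ∈ f k.unpair.1) a ha
      (fun k x hx => by
        obtain ⟨y, hy, hxy⟩ := (h k.unpair.1).2.1 x hx
        exact ⟨y, hxy, (h k.unpair.1).1 hy, hy⟩)
    set s := iSup b with hsdef
    have hslt : s < omega1 := iSup_nat_lt_omega1 hblt
    have hbles : ∀ k, b k < s := fun k =>
      lt_of_lt_of_le (hmono (Nat.lt_succ_self k))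
        (le_ciSup (bddAbove_of_subset_Iio (by rintro x ⟨k, rfl⟩; exact hblt k)) (k + 1))
    have has : a < s := hb0 ▸ hbles 0
    refine ⟨s, Set.mem_iInter.2 fun m => ?_, has⟩
    refine mem_of_closed_cofinal (h m) hslt (lt_of_le_of_lt (zero_le (a := a)) has) ?_
    intro x hx
    obtain ⟨k, hk⟩ := exists_lt_of_lt_ciSup (hsdef ▸ hx)
    refine ⟨b (Nat.pair m k + 1), ?_, ?_, hbles _⟩
    · have := hbP (Nat.pair m k)
      rwa [Nat.unpair_pair] at this
    · exact lt_of_lt_of_le hk (le_of_lt (hmono (Nat.lt_succ_of_le (Nat.right_le_pair m k))))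
  · intro a ha hne hsup
    refine Set.mem_iInter.2 fun m => ?_
    refine (h m).2.2 a ha ?_ ?_
    · obtain ⟨x, hx⟩ := hne
      exact ⟨x, Set.mem_iInter.1 hx.1 m, hx.2⟩
    · refine sSup_eq_of_cofinal (fun x hx => hx.2) ?_ ?_
      · intro x hx
        obtain ⟨y, hy, hxy, hys⟩ := exists_gt_of_sSup_eq (fun z hz => hz.2) hsup hx
        exact ⟨y, ⟨Set.mem_iInter.1 hy.1 m, hys⟩, hxy⟩
      · obtain ⟨x, hx⟩ := hne
        exact lt_of_le_of_lt (zero_le (a := x)) hx.2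

lemma clubBelow_inter {C D : Set Ordinal} (hC : IsClubBelow C) (hD : IsClubBelow D) :
    IsClubBelow (C ∩ D) := by
  have := clubBelow_iInter_nat (fun k => if k = 0 then C else D)
    (fun k => by by_cases h : k = 0 <;> simp [h, hC, hD])
  have heq : (⋂ k, if k = 0 then C else D) = C ∩ D := by
    ext x
    simp only [Set.mem_iInter, Set.mem_inter_iff]
    constructor
    · intro h; exact ⟨by simpa using h 0, by simpa using h 1⟩
    · rintro ⟨h1, h2⟩ k; by_cases hk : k = 0 <;> simp [hk, h1, h2]
  rwa [heq] at this


lemma clubBelow_sInter_lt (Cc : Ordinal → Set Ordinal) (hCc : ∀ η, IsClubBelow (Cc η))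
    {x : Ordinal} (hx : x < omega1) :
    IsClubBelow (Set.Iio omega1 ∩ ⋂ η ∈ Set.Iio x, Cc η) := by
  rcases eq_or_ne x 0 with rfl | hx0
  · have h0 : Set.Iio (0 : Ordinal.{0}) = ∅ :=
      Set.eq_empty_iff_forall_notMem.2 fun y hy => not_lt_of_ge (zero_le (a := y)) hy
    have : (Set.Iio omega1 ∩ ⋂ η ∈ Set.Iio (0 : Ordinal), Cc η) = Set.Iio omega1 := by
      simp [h0]
    rw [this]; exact clubBelow_Iio
  · obtain ⟨e, he⟩ := (countable_Iio_omega1 hx).exists_eq_range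
      ⟨0, pos_iff_ne_zero.2 hx0⟩
    have heq : (Set.Iio omega1 ∩ ⋂ η ∈ Set.Iio x, Cc η) =
        ⋂ k, (Set.Iio omega1 ∩ Cc (e k)) := by
      ext z
      simp only [Set.mem_inter_iff, Set.mem_iInter, he, Set.mem_range]
      constructor
      · rintro ⟨hz, hz2⟩ k
        exact ⟨hz, hz2 (e k) ⟨k, rfl⟩⟩
      · intro h
        exact ⟨(h 0).1, fun η ⟨k, hk⟩ => hk ▸ (h k).2⟩
    rw [heq]
    exact clubBelow_iInter_nat _ (fun k => clubBelow_inter clubBelow_Iio (hCc (e k)))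

lemma stationary_nonempty {S : Set Ordinal} (hS : IsStationary S) : S.Nonempty := by
  obtain ⟨x, hx⟩ := hS.2 _ clubBelow_Iio; exact ⟨x, hx.1⟩

lemma stationary_inter_club {S D : Set Ordinal} (hS : IsStationary S)
    (hD : IsClubBelow D) : IsStationary (S ∩ D) := by
  refine ⟨fun x hx => hS.1 hx.1, fun E hE => ?_⟩
  obtain ⟨x, hx, hxDE⟩ := hS.2 (D ∩ E) (clubBelow_inter hD hE)
  exact ⟨x, ⟨hx, hxDE.1⟩, hxDE.2⟩

lemma stationary_uncountable {S : Set Ordinal} (hS : IsStationary S) : ¬ S.Countable := by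
  intro hc
  obtain ⟨x0, hx0⟩ := stationary_nonempty hS
  obtain ⟨e, he⟩ := hc.exists_eq_range ⟨x0, hx0⟩
  set s := iSup e with hs
  have helt : ∀ k, e k < omega1 := fun k => hS.1 (he ▸ Set.mem_range_self k)
  have hslt : s < omega1 := iSup_nat_lt_omega1 helt
  have hD : IsClubBelow {x | s < x ∧ x < omega1} := by
    refine ⟨fun x hx => hx.2, fun a ha => ?_, fun a ha hne hsup => ?_⟩
    · exact ⟨max a s + 1, ⟨lt_of_le_of_lt (le_max_right a s) (lt_add_one _),
        succ_lt_omega1 (max_lt ha hslt)⟩, lt_of_le_of_lt (le_max_left a s) (lt_add_one _)⟩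
    · obtain ⟨y, hy⟩ := hne
      exact ⟨lt_trans hy.1.1 hy.2, ha⟩
  obtain ⟨x, hxS, hxD⟩ := hS.2 _ hD
  have : x ≤ s := by
    rw [he] at hxS
    obtain ⟨k, rfl⟩ := hxS
    exact le_ciSup (bddAbove_of_subset_Iio (by rintro y ⟨k, rfl⟩; exact helt k)) k
  exact absurd hxD.1 (not_lt.2 this)

lemma not_countable_nonempty {α : Type*} {X : Set α} (h : ¬ X.Countable) : X.Nonempty := by
  by_contra hc
  rw [Set.not_nonempty_iff_eq_empty] at hc
  exact h (hc ▸ Set.countable_empty)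

lemma exists_uncountable_fiber {α β : Type*} {U : Set α} {F : α → β} {V : Set β}
    (hU : ¬ U.Countable) (hV : V.Countable) (hF : ∀ x ∈ U, F x ∈ V) :
    ∃ v, ¬ {x ∈ U | F x = v}.Countable := by
  by_contra hc
  push_neg at hc
  apply hU
  have hsub : U ⊆ ⋃ v ∈ V, {x ∈ U | F x = v} :=
    fun x hx => Set.mem_biUnion (hF x hx) ⟨hx, rfl⟩
  exact Set.Countable.mono hsub (hV.biUnion (fun v _ => hc v))

lemma clubBelow_limitOf {C : Set Ordinal} (hC : IsClubBelow C) :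
    IsClubBelow {a | a < omega1 ∧ IsLimitOf C a} := by
  refine ⟨fun a ha => ha.1, ?_, ?_⟩
  · intro a ha
    obtain ⟨b, hb0, hmono, hblt, hbP⟩ := seq_build (fun _ _ y => y ∈ C) a ha
      (fun k x hx => by
        obtain ⟨y, hy, hxy⟩ := hC.2.1 x hx
        exact ⟨y, hxy, hC.1 hy, hy⟩)
    set s := iSup b with hsdef
    have hslt : s < omega1 := iSup_nat_lt_omega1 hblt
    have hbles : ∀ k, b k < s := fun k =>
      lt_of_lt_of_le (hmono (Nat.lt_succ_self k))
        (le_ciSup (bddAbove_of_subset_Iio (by rintro y ⟨k, rfl⟩; exact hblt k)) (k + 1))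
    have has : a < s := hb0 ▸ hbles 0
    have hcof : ∀ x < s, ∃ c ∈ C, x < c ∧ c < s := by
      intro x hx
      obtain ⟨k, hk⟩ := exists_lt_of_lt_ciSup (hsdef ▸ hx)
      exact ⟨b (k + 1), hbP k, lt_of_lt_of_le hk (le_of_lt (hmono (Nat.lt_succ_self k))),
        hbles (k + 1)⟩
    refine ⟨s, ⟨hslt, ⟨b 1, hbP 0, hbles 1⟩, ?_⟩, has⟩
    refine sSup_eq_of_cofinal (fun z hz => hz.2) ?_ (lt_of_le_of_lt (zero_le (a := a)) has)
    intro x hx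
    obtain ⟨c, hc, hxc, hcs⟩ := hcof x hx
    exact ⟨c, ⟨hc, hcs⟩, hxc⟩
  · intro a ha hne hsup
    have ha0 : 0 < a := by
      obtain ⟨y, hy⟩ := hne
      exact lt_of_le_of_lt (zero_le (a := y)) hy.2
    refine ⟨ha, ?_, ?_⟩
    · obtain ⟨y, hyL, hy0, hya⟩ := exists_gt_of_sSup_eq (fun z hz => hz.2) hsup ha0
      obtain ⟨c, hc⟩ := hyL.1.2.1
      exact ⟨c, hc.1, lt_trans hc.2 hya⟩
    · refine sSup_eq_of_cofinal (fun z hz => hz.2) ?_ ha0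
      intro x hx
      obtain ⟨y, hyL, hxy, hya⟩ := exists_gt_of_sSup_eq (fun z hz => hz.2) hsup hx
      obtain ⟨c, hcC, hxc⟩ := exists_gt_of_sSup_eq (fun z hz => hz.2) hyL.1.2.2 hxy
      exact ⟨c, ⟨hcC.1, lt_trans hxc.2 hya⟩, hxc.1⟩

lemma fodor {S : Set Ordinal} (hS : IsStationary S) (f : Ordinal → Ordinal)
    (hf : ∀ ξ ∈ S, f ξ < ξ) : ∃ η, IsStationary {ξ ∈ S | f ξ = η} := by
  by_contra hc
  push_neg at hc
  have hCc : ∀ η, ∃ D, IsClubBelow D ∧ ∀ ξ ∈ S, f ξ = η → ξ ∉ D := by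
    intro η
    have hsub : {ξ ∈ S | f ξ = η} ⊆ Set.Iio omega1 := fun ξ hξ => hS.1 hξ.1
    have hne : ¬ ∀ D, IsClubBelow D → ({ξ ∈ S | f ξ = η} ∩ D).Nonempty :=
      fun hall => hc η ⟨hsub, hall⟩
    push_neg at hne
    obtain ⟨D, hD, hDe⟩ := hne
    rw [← Set.not_nonempty_iff_eq_empty] at hDe
    rw [Set.not_nonempty_iff_eq_empty] at hDe
    refine ⟨D, hD, fun ξ hξS hξf hξD => ?_⟩
    have : ξ ∈ ({ξ ∈ S | f ξ = η} ∩ D) := ⟨⟨hξS, hξf⟩, hξD⟩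
    rw [hDe] at this
    exact this
  choose Cc hCcclub hCcavoid using hCc
  have hΔclub : IsClubBelow {a | a < omega1 ∧ ∀ η < a, a ∈ Cc η} := by
    refine ⟨fun a ha => ha.1, ?_, ?_⟩
    · intro a ha
      obtain ⟨b, hb0, hmono, hblt, hbP⟩ := seq_build (fun _ x y => ∀ η < x, y ∈ Cc η) a ha
        (fun k x hx => by
          obtain ⟨y, hyD, hxy⟩ := (clubBelow_sInter_lt Cc hCcclub hx).2.1 x hx
          refine ⟨y, hxy, hyD.1, fun η hη => ?_⟩
          exact Set.mem_iInter₂.1 hyD.2 η hη)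
      set s := iSup b with hsdef
      have hslt : s < omega1 := iSup_nat_lt_omega1 hblt
      have hbles : ∀ k, b k < s := fun k =>
        lt_of_lt_of_le (hmono (Nat.lt_succ_self k))
          (le_ciSup (bddAbove_of_subset_Iio (by rintro y ⟨k, rfl⟩; exact hblt k)) (k + 1))
      have has : a < s := hb0 ▸ hbles 0
      refine ⟨s, ⟨hslt, fun η hη => ?_⟩, has⟩
      obtain ⟨k, hk⟩ := exists_lt_of_lt_ciSup (hsdef ▸ hη)
      refine mem_of_closed_cofinal (hCcclub η) hslt
        (lt_of_le_of_lt (zero_le (a := a)) has) ?_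
      intro x hx
      obtain ⟨k', hk'⟩ := exists_lt_of_lt_ciSup (hsdef ▸ hx)
      refine ⟨b (max k k' + 1),
        hbP (max k k') η (lt_of_lt_of_le hk (hmono.monotone (le_max_left _ _))), ?_, hbles _⟩
      exact lt_of_lt_of_le hk'
        (le_of_lt (lt_of_le_of_lt (hmono.monotone (le_max_right k k'))
          (hmono (Nat.lt_succ_self _))))
    · intro a ha hne hsup
      have ha0 : 0 < a := by
        obtain ⟨y, hy⟩ := hne
        exact lt_of_le_of_lt (zero_le (a := y)) hy.2
      refine ⟨ha, fun η hη => ?_⟩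
      refine (hCcclub η).2.2 a ha ?_ ?_
      · obtain ⟨y, hyΔ, hηy, hya⟩ := exists_gt_of_sSup_eq (fun z hz => hz.2) hsup hη
        exact ⟨y, hyΔ.1.2 η hηy, hya⟩
      · refine sSup_eq_of_cofinal (fun z hz => hz.2) ?_ ha0
        intro x hx
        obtain ⟨y, hyΔ, hxy, hya⟩ := exists_gt_of_sSup_eq (fun z hz => hz.2) hsup
          (max_lt hx hη)
        refine ⟨y, ⟨hyΔ.1.2 η (lt_of_le_of_lt (le_max_right x η) hxy), hya⟩,
          lt_of_le_of_lt (le_max_left x η) hxy⟩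
  obtain ⟨ξ, hξS, hξΔ⟩ := hS.2 _ hΔclub
  exact hCcavoid (f ξ) ξ hξS rfl (hξΔ.2 (f ξ) (hf ξ hξS))


/-! ### Node lemmas -/

lemma ht_eq_of {t : BNode} {a : Ordinal} (h : ∀ ξ, (t.1 ξ).isSome ↔ ξ < a) : ht t = a := by
  have huniq : {a' | ∀ ξ, (t.1 ξ).isSome ↔ ξ < a'} = {a} := by
    ext a'
    simp only [Set.mem_setOf_eq, Set.mem_singleton_iff]
    constructor
    · intro h'
      by_contra hne
      rcases lt_or_gt_of_ne hne with hlt | hgt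
      · exact absurd ((h' a').1 ((h a').2 hlt)) (lt_irrefl a')
      · exact absurd ((h a).1 ((h' a).2 hgt)) (lt_irrefl a)
    · rintro rfl; exact h
  rw [ht, huniq, csInf_singleton]

lemma ht_spec (t : BNode) : ∀ ξ, (t.1 ξ).isSome ↔ ξ < ht t := by
  obtain ⟨a, _, hfa⟩ := t.2
  intro ξ
  rw [ht_eq_of hfa]
  exact hfa ξ

lemma val_eq_none_of_ht_le {t : BNode} {ξ : Ordinal} (h : ht t ≤ ξ) : t.1 ξ = none := by
  rw [← Option.not_isSome_iff_eq_none, ht_spec t ξ]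
  exact not_lt.2 h

lemma bnode_ext {s t : BNode} (h : ∀ ξ, s.1 ξ = t.1 ξ) : s = t := Subtype.ext (funext h)

lemma restrict_val (t : BNode) (α ξ : Ordinal) :
    (restrict t α).1 ξ = if ξ < α then t.1 ξ else none := rfl

lemma ht_restrict (t : BNode) (α : Ordinal) : ht (restrict t α) = min α (ht t) := by
  refine ht_eq_of fun ξ => ?_
  by_cases h : ξ < α
  · simp [restrict_val, h, lt_min_iff, ht_spec t ξ]
  · simp [restrict_val, h, lt_min_iff]

lemma restrict_eq_self {t : BNode} {α : Ordinal} (h : ht t ≤ α) : restrict t α = t := by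
  refine bnode_ext fun ξ => ?_
  rw [restrict_val]
  by_cases hξ : ξ < α
  · simp [hξ]
  · simp [hξ, (val_eq_none_of_ht_le (h.trans (not_lt.1 hξ))).symm]

lemma restrict_restrict (t : BNode) (α β : Ordinal) :
    restrict (restrict t α) β = restrict t (min α β) := by
  refine bnode_ext fun ξ => ?_
  simp only [restrict_val, lt_min_iff]
  by_cases h1 : ξ < α <;> by_cases h2 : ξ < β <;> simp [h1, h2]

lemma extends'_iff {s t : BNode} :
    extends' s t ↔ ht s ≤ ht t ∧ ∀ ξ < ht s, s.1 ξ = t.1 ξ := by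
  constructor
  · intro h
    have hh : ht (restrict t (ht s)) = ht s := congrArg ht h
    rw [ht_restrict] at hh
    refine ⟨min_eq_left_iff.1 hh, fun ξ hξ => ?_⟩
    conv_lhs => rw [← h]
    rw [restrict_val]
    simp [hξ]
  · rintro ⟨hle, hval⟩
    refine bnode_ext fun ξ => ?_
    rw [restrict_val]
    by_cases hξ : ξ < ht s
    · simp [hξ, (hval ξ hξ).symm]
    · simp [hξ, (val_eq_none_of_ht_le (not_lt.1 hξ)).symm]

lemma extends'_restrict_mono {t : BNode} {α β : Ordinal} (h : α ≤ β) :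
    extends' (restrict t α) (restrict t β) := by
  rw [extends'_iff, ht_restrict, ht_restrict]
  refine ⟨min_le_min h le_rfl, fun ξ hξ => ?_⟩
  rw [lt_min_iff] at hξ
  rw [restrict_val, restrict_val]
  simp [hξ.1, lt_of_lt_of_le hξ.1 h]

lemma extends'_val_eq {s t : BNode} {ξ : Ordinal} (h : extends' s t) (hξ : ξ < ht s) :
    s.1 ξ = t.1 ξ := (extends'_iff.1 h).2 ξ hξ

lemma diffSet_restrict (s t : BNode) (α : Ordinal) :
    diffSet (restrict s α) (restrict t α) = diffSet s t ∩ Set.Iio α := by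
  ext ξ
  simp only [diffSet, Set.mem_setOf_eq, Set.mem_inter_iff, Set.mem_Iio, restrict_val]
  by_cases h : ξ < α <;> simp [h]

lemma exists_mem_diffSet {s t : BNode} (h : s ≠ t) : (diffSet s t).Nonempty := by
  rcases Set.eq_empty_or_nonempty (diffSet s t) with he | hne
  · refine absurd (bnode_ext fun ξ => ?_) h
    by_contra hne
    exact (Set.eq_empty_iff_forall_notMem.1 he ξ) hne
  · exact hne

lemma lt_of_mem_diffSet {s t : BNode} {ξ : Ordinal} (h : ξ ∈ diffSet s t) :
    ξ < ht s ∨ ξ < ht t := by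
  by_contra hc
  push_neg at hc
  exact h (by rw [val_eq_none_of_ht_le hc.1, val_eq_none_of_ht_le hc.2])

lemma lexLE_restrict {s t : BNode} (h : lexLE s t) (α : Ordinal) :
    lexLE (restrict s α) (restrict t α) := by
  rcases h with rfl | hval
  · exact Or.inl rfl
  by_cases he : restrict s α = restrict t α
  · exact Or.inl he
  right
  have hne : (diffSet (restrict s α) (restrict t α)).Nonempty := exists_mem_diffSet he
  rw [diffSet_restrict] at hne
  have hDne : (diffSet s t).Nonempty := by
    obtain ⟨x, hx⟩ := hne; exact ⟨x, hx.1⟩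
  have hmem : delta s t ∈ diffSet s t := csInf_mem hDne
  have hlt : delta s t < α := by
    obtain ⟨x, hxD, hxα⟩ := hne
    exact lt_of_le_of_lt (csInf_le' hxD) hxα
  have hdelta : delta (restrict s α) (restrict t α) = delta s t := by
    unfold delta
    rw [diffSet_restrict]
    exact le_antisymm (csInf_le' ⟨hmem, hlt⟩) (csInf_le_csInf' hne Set.inter_subset_left)
  rw [hdelta, restrict_val]
  simp [hlt, hval]


/-! ### Tuple lemmas -/

lemma tres_apply {n : ℕ} (σ : Fin n → BNode) (α : Ordinal) (i : Fin n) :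
    tres σ α i = restrict (σ i) α := rfl

lemma tIncomp_diff_below {n : ℕ} {ρ ρ' : Fin n → BNode} {α β : Ordinal}
    (hρ : ∀ i, ht (ρ i) = α) (hρ' : ∀ i, ht (ρ' i) = β) (h : tIncomp ρ ρ') :
    ∃ i ζ, (ρ i).1 ζ ≠ (ρ' i).1 ζ ∧ ζ < α ∧ ζ < β := by
  rcases le_total α β with hle | hle
  · have h1 := h.1
    rw [tExt] at h1
    push_neg at h1
    obtain ⟨i, hni⟩ := h1
    rw [extends'_iff] at hni
    push_neg at hni
    obtain ⟨ζ, hζlt, hζne⟩ := hni (by rw [hρ i, hρ' i]; exact hle)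
    rw [hρ i] at hζlt
    exact ⟨i, ζ, hζne, hζlt, lt_of_lt_of_le hζlt hle⟩
  · have h2 := h.2
    rw [tExt] at h2
    push_neg at h2
    obtain ⟨i, hni⟩ := h2
    rw [extends'_iff] at hni
    push_neg at hni
    obtain ⟨ζ, hζlt, hζne⟩ := hni (by rw [hρ i, hρ' i]; exact hle)
    rw [hρ' i] at hζlt
    exact ⟨i, ζ, hζne.symm, lt_of_lt_of_le hζlt hle, hζlt⟩

lemma wedge_reduce {n : ℕ} {σ τ : Fin n → BNode} {ξ η α β : Ordinal}
    (hσ : ∀ i, ht (σ i) = ξ) (hτ : ∀ i, ht (τ i) = η)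
    (hα : α ≤ ξ) (hβ : β ≤ η) (hinc : tIncomp (tres σ α) (tres τ β)) :
    σ ≠ τ ∧ tIncomp σ τ ∧ tmeet (tres σ α) (tres τ β) = tmeet σ τ := by
  have hρht : ∀ i, ht (tres σ α i) = α := fun i => by
    rw [tres_apply, ht_restrict, hσ i, min_eq_left hα]
  have hρ'ht : ∀ i, ht (tres τ β i) = β := fun i => by
    rw [tres_apply, ht_restrict, hτ i, min_eq_left hβ]
  obtain ⟨i₀, ζ₀, hζne, hζα, hζβ⟩ := tIncomp_diff_below hρht hρ'ht hinc
  have hζne' : (σ i₀).1 ζ₀ ≠ (τ i₀).1 ζ₀ := by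
    have h1 : (tres σ α i₀).1 ζ₀ = (σ i₀).1 ζ₀ := by rw [tres_apply, restrict_val]; simp [hζα]
    have h2 : (tres τ β i₀).1 ζ₀ = (τ i₀).1 ζ₀ := by rw [tres_apply, restrict_val]; simp [hζβ]
    rwa [h1, h2] at hζne
  have hζσT : ζ₀ ∈ tdiff σ τ := ⟨i₀, hζne'⟩
  set d := tdelta σ τ with hd
  have hdmem : d ∈ tdiff σ τ := csInf_mem ⟨ζ₀, hζσT⟩
  have hdα : d < α := lt_of_le_of_lt (csInf_le' hζσT) hζα
  have hdβ : d < β := lt_of_le_of_lt (csInf_le' hζσT) hζβ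
  obtain ⟨i₁, hi₁⟩ := hdmem
  have hστ : σ ≠ τ := fun he => hi₁ (by rw [he])
  have hIncστ : tIncomp σ τ := by
    constructor
    · intro hmm
      exact hi₁ (extends'_val_eq (hmm i₁) (by rw [hσ i₁]; exact lt_of_lt_of_le hdα hα))
    · intro hmm
      exact hi₁ ((extends'_val_eq (hmm i₁) (by rw [hτ i₁]; exact lt_of_lt_of_le hdβ hβ)).symm)
  have hmem' : d ∈ tdiff (tres σ α) (tres τ β) := by
    refine ⟨i₁, ?_⟩
    rw [tres_apply, tres_apply, restrict_val, restrict_val]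
    simpa [hdα, hdβ] using hi₁
  have hdres : tdelta (tres σ α) (tres τ β) = d := by
    refine le_antisymm (csInf_le' hmem') ?_
    have hmemres : tdelta (tres σ α) (tres τ β) ∈ tdiff (tres σ α) (tres τ β) :=
      csInf_mem ⟨d, hmem'⟩
    set e := tdelta (tres σ α) (tres τ β) with hedef
    obtain ⟨i₂, hi₂⟩ := hmemres
    by_cases heα : e < α
    · by_cases heβ : e < β
      · refine csInf_le' (⟨i₂, ?_⟩ : e ∈ tdiff σ τ)
        have h1 : (tres σ α i₂).1 e = (σ i₂).1 e := by rw [tres_apply, restrict_val]; simp [heα]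
        have h2 : (tres τ β i₂).1 e = (τ i₂).1 e := by rw [tres_apply, restrict_val]; simp [heβ]
        rwa [h1, h2] at hi₂
      · exact le_of_lt (lt_of_lt_of_le hdβ (not_lt.1 heβ))
    · exact le_of_lt (lt_of_lt_of_le hdα (not_lt.1 heα))
  refine ⟨hστ, hIncστ, ?_⟩
  funext i
  show restrict (tres σ α i) (tdelta (tres σ α) (tres τ β)) = restrict (σ i) (tdelta σ τ)
  rw [hdres, tres_apply, restrict_restrict, min_eq_right (le_of_lt hdα), ← hd]

/-- a stationary level sequence inside `K^{[n]}_φ` contains two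
members whose meet lies in `K^{[n]}`. -/
theorem stmt10 (T K : Set BNode) (hcoh : Coherent T) (hsp : IsSpecial T)
    (hAr : IsAronszajn T) (hfm : FinModClosed T) (hKT : K ⊆ T)
    (n : ℕ) (C : Set Ordinal) (N : Ordinal → Set (Set (Fin n → BNode)))
    (hW : Phi0Witness T K n C N) (S : Set Ordinal)
    (hS : IsStationary S) (hSC : S ⊆ C)
    (σ : Ordinal → Fin n → BNode) (hseq : LevelSeq T n S σ)
    (hKφ : ∀ ξ ∈ S, σ ξ ∈ KPhi T K n C N) :
    ∃ ξ ∈ S, ∃ η ∈ S, ξ ≠ η ∧ tIncomp (σ ξ) (σ η) ∧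
      KTup T K n (tmeet (σ ξ) (σ η)) := by
  by_contra hcontra
  push_neg at hcontra
  obtain ⟨hCclub, hN, hNmono, hNcont, -⟩ := hW
  rcases Nat.eq_zero_or_pos n with hn0 | npos
  · -- degenerate case n = 0
    subst hn0
    obtain ⟨ξ, hξS⟩ := stationary_nonempty hS
    obtain ⟨-, ν, hνC, -, B, hBperp, -, -⟩ := hKφ ξ hξS
    haveI : Subsingleton (Fin 0 → BNode) := ⟨fun f g => funext fun i => i.elim0⟩
    exact hBperp.1.2.2 (Set.subsingleton_of_subsingleton).countable
  -- main case n > 0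
  set i0 : Fin n := ⟨0, npos⟩ with hi0
  have hhts : ∀ ξ ∈ S, ∀ i, ht (σ ξ i) = ξ := fun ξ hξ => (hseq ξ hξ).2
  have hΛclub : IsClubBelow {a | a < omega1 ∧ IsLimitOf C a} := clubBelow_limitOf hCclub
  set S' := S ∩ {a | a < omega1 ∧ IsLimitOf C a} with hS'def
  have hS'stat : IsStationary S' := stationary_inter_club hS hΛclub
  have key : ∀ ξ, ∃ γ B, ξ ∈ S' →
      γ ∈ C ∧ γ < ξ ∧ B ∈ FnPerp T K n ∧ B ∈ N γ ∧ σ ξ ∈ B ∧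
        ∀ i, diffSet (σ ξ i) (σ ξ i0) ⊆ Set.Iio γ := by
    intro ξ
    by_cases hξ : ξ ∈ S'
    · obtain ⟨hξS, hξlt, hξlim⟩ := hξ
      obtain ⟨hTup, ν, hνC, hhtν, B, hBperp, hBN, hσB⟩ := hKφ ξ hξS
      have hνξ : ν = ξ := by rw [← hhtν i0, hhts ξ hξS i0]
      rw [hνξ] at hBN
      rw [hNcont ξ (hSC hξS) hξlim] at hBN
      obtain ⟨γ₁, hγ₁, hBγ₁⟩ := Set.mem_iUnion₂.1 hBN
      -- bound for the difference sets
      set Dall := ⋃ i, diffSet (σ ξ i) (σ ξ i0) with hDall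
      have hDfin : Dall.Finite := Set.finite_iUnion fun i =>
        hcoh _ ((hseq ξ hξS).1.1 i) _ ((hseq ξ hξS).1.1 i0)
          (by rw [hhts ξ hξS i, hhts ξ hξS i0])
      have hDsub : Dall ⊆ Set.Iio ξ := by
        intro x hx
        obtain ⟨i, hxi⟩ := Set.mem_iUnion.1 hx
        rcases lt_of_mem_diffSet hxi with h | h
        · rwa [hhts ξ hξS i] at h
        · rwa [hhts ξ hξS i0] at h
      have hξ0 : 0 < ξ := by
        obtain ⟨⟨y, -, hylt⟩, -⟩ := hξlim
        exact lt_of_le_of_lt (zero_le (a := y)) hylt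
      set μ := sSup Dall with hμ
      have hμlt : μ < ξ := by
        rcases Set.eq_empty_or_nonempty Dall with he | hne
        · rw [hμ, he, csSup_empty]
          exact lt_of_le_of_lt bot_le (lt_of_le_of_lt le_rfl hξ0)
        · exact hDsub (hne.csSup_mem hDfin)
      obtain ⟨γ, hγmem, hmaxγ, hγξ⟩ := exists_gt_of_sSup_eq (fun z hz => hz.2) hξlim.2
        (max_lt hγ₁.2 hμlt)
      refine ⟨γ, B, fun _ => ⟨hγmem.1, hγξ, hBperp, ?_, hσB, ?_⟩⟩
      · exact hNmono γ₁ hγ₁.1 γ hγmem.1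
          (le_of_lt (lt_of_le_of_lt (le_max_left γ₁ μ) hmaxγ)) hBγ₁
      · intro i x hx
        have hxD : x ∈ Dall := Set.mem_iUnion.2 ⟨i, hx⟩
        have : x ≤ μ := le_csSup (bddAbove_of_subset_Iio hDsub) hxD
        exact lt_of_le_of_lt this (lt_of_le_of_lt (le_max_right γ₁ μ) hmaxγ)
    · exact ⟨0, ∅, fun h => absurd h hξ⟩
  choose g Bf hg using key
  have hreg : ∀ ξ ∈ S', g ξ < ξ := fun ξ hξ => (hg ξ hξ).2.1
  obtain ⟨η₀, hstat₁⟩ := fodor hS'stat g hreg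
  have hS₁unc : ¬ {ξ ∈ S' | g ξ = η₀}.Countable := stationary_uncountable hstat₁
  obtain ⟨ξ₁, hξ₁⟩ := stationary_nonempty hstat₁
  have hη₀C : η₀ ∈ C := hξ₁.2 ▸ (hg ξ₁ hξ₁.1).1
  have hNη₀c : (N η₀).Countable := (hN η₀ hη₀C).1
  obtain ⟨B, hBunc⟩ := exists_uncountable_fiber (F := Bf) hS₁unc hNη₀c (fun ξ hξ => by
    have h1 := (hg ξ hξ.1).2.2.2.1
    rwa [hξ.2] at h1)
  obtain ⟨ξ₂, hξ₂⟩ := not_countable_nonempty hBunc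
  have hBperp : B ∈ FnPerp T K n := hξ₂.2 ▸ (hg ξ₂ hξ₂.1.1).2.2.1
  set Dp : Ordinal → Fin n → Set Ordinal := fun ξ i => diffSet (σ ξ i) (σ ξ i0) with hDp
  have hη₀lt : η₀ < omega1 := hCclub.1 hη₀C
  have hVcnt : {gf : Fin n → Set Ordinal |
      ∀ i, gf i ∈ {F : Set Ordinal | F.Finite ∧ F ⊆ Set.Iio η₀}}.Countable :=
    Set.countable_pi fun _ => Set.countable_setOf_finite_subset (countable_Iio_omega1 hη₀lt)
  obtain ⟨Dc, hDcunc⟩ := exists_uncountable_fiber (F := Dp) hBunc hVcnt (fun ξ hξ => by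
    intro i
    have hξS : ξ ∈ S := hξ.1.1.1
    refine ⟨hcoh _ ((hseq ξ hξS).1.1 i) _ ((hseq ξ hξS).1.1 i0)
      (by rw [hhts ξ hξS i, hhts ξ hξS i0]), ?_⟩
    have h2 := (hg ξ hξ.1.1).2.2.2.2.2 i
    rwa [hξ.1.2] at h2)
  set S₂ := {ξ ∈ {ξ ∈ {ξ ∈ S' | g ξ = η₀} | Bf ξ = B} | Dp ξ = Dc} with hS₂def
  have hS₂unc : ¬ S₂.Countable := hDcunc
  have hmemS : ∀ ξ ∈ S₂, ξ ∈ S := fun ξ hξ => hξ.1.1.1.1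
  have hmemB : ∀ ξ ∈ S₂, σ ξ ∈ B := fun ξ hξ => hξ.1.2 ▸ (hg ξ hξ.1.1.1).2.2.2.2.1
  set X := {τ | ∃ ξ ∈ S₂, σ ξ = τ} with hX
  set A := tDownClosure X with hA
  have hXA : X ⊆ A := by
    rintro τ ⟨ξ, hξ, rfl⟩
    refine ⟨σ ξ, ⟨ξ, hξ, rfl⟩, ξ, fun i => le_of_eq (hhts ξ (hmemS ξ hξ) i).symm, ?_⟩
    funext i
    exact (restrict_eq_self (le_of_eq (hhts ξ (hmemS ξ hξ) i))).symm
  have hXunc : ¬ X.Countable := by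
    intro hc
    apply hS₂unc
    have hmt : Set.MapsTo σ S₂ X := fun ξ hξ => ⟨ξ, hξ, rfl⟩
    refine hmt.countable_of_injOn ?_ hc
    intro ξ hξ ζ hζ he
    rw [← hhts ξ (hmemS ξ hξ) i0, ← hhts ζ (hmemS ζ hζ) i0, he]
  have hAmem : ∀ ρ ∈ A, ∃ ξ ∈ S₂, ∃ ζ ≤ ξ, ρ = tres (σ ξ) ζ := by
    rintro ρ ⟨τ, hτX, ζ, hζle, rfl⟩
    obtain ⟨ξ, hξ, rfl⟩ := hτX
    exact ⟨ξ, hξ, ζ, le_of_le_of_eq (hζle i0) (hhts ξ (hmemS ξ hξ) i0), rfl⟩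
  have hAFn : A ∈ Fn T K n := by
    refine ⟨⟨?_, ?_, ?_⟩, ?_, ?_⟩
    · intro ρ hρ
      obtain ⟨ξ, hξ, ζ, hζ, rfl⟩ := hAmem ρ hρ
      have hTup := (hseq ξ (hmemS ξ hξ)).1
      refine ⟨fun i => hAr.1 _ (hTup.1 i) ζ, fun i j => ?_,
        fun i j hij => lexLE_restrict (hTup.2.2 i j hij) ζ⟩
      rw [tres_apply, tres_apply, ht_restrict, ht_restrict,
        hhts ξ (hmemS ξ hξ) i, hhts ξ (hmemS ξ hξ) j]
    · rintro ρ hρ α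
      obtain ⟨ξ, hξ, ζ, hζ, rfl⟩ := hAmem ρ hρ
      refine ⟨σ ξ, ⟨ξ, hξ, rfl⟩, min ζ α, fun i =>
        le_trans (min_le_left ζ α) (by rw [hhts ξ (hmemS ξ hξ) i]; exact hζ), ?_⟩
      funext i
      exact restrict_restrict (σ ξ i) ζ α
    · intro hc
      exact hXunc (hc.mono hXA)
    · intro ρ hρ ρ' hρ' hle
      obtain ⟨ξ, hξ, ζ, hζ, rfl⟩ := hAmem ρ hρ
      obtain ⟨ξ', hξ', ζ', hζ', rfl⟩ := hAmem ρ' hρ'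
      intro hpos i
      have hζζ' : ζ ≤ ζ' := by
        have := hle i0
        rwa [tres_apply, tres_apply, ht_restrict, ht_restrict,
          hhts ξ (hmemS ξ hξ) i0, hhts ξ' (hmemS ξ' hξ') i0,
          min_eq_left hζ, min_eq_left hζ'] at this
      have hD : diffSet (σ ξ' i) (σ ξ' ⟨0, hpos⟩) = diffSet (σ ξ i) (σ ξ ⟨0, hpos⟩) := by
        have h1 : diffSet (σ ξ i) (σ ξ i0) = Dc i := congrFun hξ.2 i
        have h2 : diffSet (σ ξ' i) (σ ξ' i0) = Dc i := congrFun hξ'.2 i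
        exact h2.trans h1.symm
      rw [tres_apply, tres_apply, tres_apply, tres_apply, diffSet_restrict, diffSet_restrict,
        ht_restrict, hhts ξ (hmemS ξ hξ) ⟨0, hpos⟩, min_eq_left hζ, hD,
        Set.inter_assoc, Set.Iio_inter_Iio, min_eq_right hζζ']
    · rintro w ⟨ρ, hρ, ρ', hρ', hinc, rfl⟩
      obtain ⟨ξ, hξ, ζ, hζ, rfl⟩ := hAmem ρ hρ
      obtain ⟨ξ', hξ', ζ', hζ', rfl⟩ := hAmem ρ' hρ'
      obtain ⟨hne, hinc', hmeq⟩ := wedge_reduce (hhts ξ (hmemS ξ hξ))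
        (hhts ξ' (hmemS ξ' hξ')) hζ hζ' hinc
      have hξξ' : ξ ≠ ξ' := fun he => hne (by rw [he])
      rw [hmeq]
      exact hcontra ξ (hmemS ξ hξ) ξ' (hmemS ξ' hξ') hξξ' hinc'
  have hcount := hBperp.2 A hAFn
  apply hXunc
  refine Set.Countable.mono ?_ hcount
  rintro τ hτ
  refine ⟨hXA hτ, ?_⟩
  obtain ⟨ξ, hξ, rfl⟩ := hτ
  exact hmemB ξ hξ

end Basis5
end
end
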